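/- Let B be a finitely generated projective R-algebra and suppose σ: B → B is an R-linear map with σ(1) = 1 such that x·σ(x) ∈ R for all x ∈ B. Then σ is a standard involution on B; in particular σ(xy) = σ(y)σ(x) and σ(σ(x)) = x for all x, y ∈ B. -/

import Mathlib

open scoped TensorProduct

section Helpers
variable {R B : Type*} [CommRing R] [Ring B] [Algebra R B]
variable (σ : B →ₗ[R] B)


lemma si_trace_mem (h1 : σ 1 = 1) (hnrd : ∀ x : B, x * σ x ∈ (algebraMap R B).range)
    (x : B) : x + σ x ∈ (algebraMap R B).range := by
  have h := hnrd (x + 1)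
  have e : (x + 1) * σ (x + 1) = x * σ x + (x + σ x) + 1 := by
    rw [map_add, h1]; noncomm_ring
  rw [e] at h
  have h2 := sub_mem (sub_mem h (hnrd x)) (one_mem (algebraMap R B).range)
  have e2 : x * σ x + (x + σ x) + 1 - x * σ x - 1 = x + σ x := by abel
  rwa [e2] at h2

lemma si_polar_mem (hnrd : ∀ x : B, x * σ x ∈ (algebraMap R B).range)
    (x y : B) : x * σ y + y * σ x ∈ (algebraMap R B).range := by
  have h := hnrd (x + y)
  have e : (x + y) * σ (x + y) = x * σ x + y * σ y + (x * σ y + y * σ x) := by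
    rw [map_add]; noncomm_ring
  rw [e] at h
  have h2 := sub_mem (sub_mem h (hnrd x)) (hnrd y)
  have e2 : x * σ x + y * σ y + (x * σ y + y * σ x) - x * σ x - y * σ y = x * σ y + y * σ x := by
    abel
  rwa [e2] at h2

lemma si_invol (h1 : σ 1 = 1) (hnrd : ∀ x : B, x * σ x ∈ (algebraMap R B).range)
    (x : B) : σ (σ x) = x := by
  obtain ⟨t, ht⟩ := si_trace_mem σ h1 hnrd x
  have hσx : σ x = algebraMap R B t - x := by rw [ht]; abel
  have halg : σ (algebraMap R B t) = algebraMap R B t := by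
    rw [Algebra.algebraMap_eq_smul_one, map_smul, h1]
  rw [hσx, map_sub, halg, hσx]; abel





lemma si_u_mem (h1 : σ 1 = 1) (hnrd : ∀ x : B, x * σ x ∈ (algebraMap R B).range)
    (x y : B) : σ (x * y) - σ y * σ x ∈ (algebraMap R B).range := by
  obtain ⟨T, hT⟩ := si_trace_mem σ h1 hnrd (x * y)
  obtain ⟨tx, htx⟩ := si_trace_mem σ h1 hnrd x
  obtain ⟨ty, hty⟩ := si_trace_mem σ h1 hnrd y
  obtain ⟨s, hs⟩ := si_polar_mem σ hnrd x y
  refine ⟨T - ty * tx + s, ?_⟩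
  have hσxy : σ (x * y) = algebraMap R B T - x * y := by rw [hT]; abel
  have hσx : σ x = algebraMap R B tx - x := by rw [htx]; abel
  have hσy : σ y = algebraMap R B ty - y := by rw [hty]; abel
  rw [map_add, map_sub, map_mul, hs, hσxy, hσx, hσy]
  have c1 : algebraMap R B ty * x = x * algebraMap R B ty := Algebra.commutes ty x
  simp only [mul_sub, sub_mul, mul_add, add_mul, c1]
  abel

lemma si_uy_mem (h1 : σ 1 = 1) (hnrd : ∀ x : B, x * σ x ∈ (algebraMap R B).range)
    (x y : B) : (σ (x * y) - σ y * σ x) * y ∈ (algebraMap R B).range := by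
  -- key1 : u(x',y) * (x'*y) ∈ range
  have key1 : ∀ x' : B, (σ (x' * y) - σ y * σ x') * (x' * y) ∈ (algebraMap R B).range := by
    intro x'
    obtain ⟨e, he⟩ := si_u_mem σ h1 hnrd x' y
    rw [← he, Algebra.commutes e (x' * y), he, mul_sub]
    refine sub_mem (hnrd (x' * y)) ?_
    obtain ⟨ny, hny⟩ := hnrd y
    have e2 : x' * y * (σ y * σ x') = x' * (y * σ y) * σ x' := by noncomm_ring
    rw [e2, ← hny, show x' * algebraMap R B ny * σ x'
        = algebraMap R B ny * (x' * σ x') by rw [← Algebra.commutes ny x']; noncomm_ring]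
    exact mul_mem ⟨ny, rfl⟩ (hnrd x')
  have key2 : σ ((x + 1) * y) - σ y * σ (x + 1) = σ (x * y) - σ y * σ x := by
    have : (x + 1) * y = x * y + y := by noncomm_ring
    rw [this, map_add, map_add, h1, mul_add, mul_one]
    abel
  have h3 := key1 (x + 1)
  rw [key2] at h3
  have h4 := key1 x
  have e3 : (σ (x * y) - σ y * σ x) * ((x + 1) * y) - (σ (x * y) - σ y * σ x) * (x * y)
      = (σ (x * y) - σ y * σ x) * y := by noncomm_ring
  have := sub_mem h3 h4
  rwa [e3] at this

end Helpers


section LocalCase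
variable {R B : Type*} [CommRing R] [IsLocalRing R] [Ring B] [Algebra R B]
variable [Module.Finite R B] [Module.Free R B]

omit [IsLocalRing R] [Module.Free R B] in
lemma si_exists_unit_coord [IsLocalRing R] [Nontrivial B] {ι : Type*} (v : Module.Basis ι R B) :
    ∃ i₀, IsUnit (v.repr 1 i₀) := by
  by_contra hc
  push_neg at hc
  have h1m : (1 : B) ∈ (IsLocalRing.maximalIdeal R) • (⊤ : Submodule R B) := by
    have hv := Module.Basis.linearCombination_repr v 1
    rw [← hv, Finsupp.linearCombination_apply, Finsupp.sum]
    refine Submodule.sum_mem _ fun i _ => Submodule.smul_mem_smul ?_ trivial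
    exact hc i
  have htop : (⊤ : Submodule R B) ≤ (IsLocalRing.maximalIdeal R) • (⊤ : Submodule R B) := by
    intro b _
    have hb : b = b * 1 := (mul_one b).symm
    rw [hb]
    refine Submodule.smul_induction_on h1m (fun r hr n _ => ?_) (fun m1 m2 hm1 hm2 => ?_)
    · rw [mul_smul_comm]
      exact Submodule.smul_mem_smul hr trivial
    · rw [mul_add]
      exact Submodule.add_mem _ hm1 hm2
  have hbot := Submodule.eq_bot_of_le_smul_of_le_jacobson_bot (IsLocalRing.maximalIdeal R) ⊤
    (Module.Finite.fg_top (R := R) (M := B)) htop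
    (by rw [IsLocalRing.jacobson_eq_maximalIdeal ⊥ bot_ne_top])
  have : (1 : B) ∈ (⊥ : Submodule R B) := hbot ▸ Submodule.mem_top
  simp only [Submodule.mem_bot] at this
  exact one_ne_zero this

lemma si_local (σ : B →ₗ[R] B) (h1 : σ 1 = 1)
    (hnrd : ∀ x : B, x * σ x ∈ (algebraMap R B).range)
    (x y : B) : σ (x * y) = σ y * σ x := by
  classical
  cases subsingleton_or_nontrivial B with
  | inl hss => exact Subsingleton.elim _ _
  | inr hnt =>
  let v := Module.Free.chooseBasis R B
  obtain ⟨i₀, hi₀⟩ := si_exists_unit_coord v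
  obtain ⟨ua, hua⟩ := hi₀
  set c : R := ((ua⁻¹ : Rˣ) : R) with hc
  have hca : c * v.repr 1 i₀ = 1 := by rw [hc, ← hua]; exact ua.inv_mul
  set d : B := 1 - v i₀ with hd
  set φ : B →ₗ[R] R := v.coord i₀ with hφ
  have hφd : φ d = v.repr 1 i₀ - 1 := by
    simp [hφ, hd, Module.Basis.coord_apply, map_sub, Module.Basis.repr_self]
  have hφv : φ (v i₀) = 1 := by simp [hφ, Module.Basis.coord_apply, Module.Basis.repr_self]
  let f : B →ₗ[R] B := LinearMap.id + φ.smulRight d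
  let g : B →ₗ[R] B := LinearMap.id - (c • φ).smulRight d
  have hfg : ∀ b, f (g b) = b := by
    intro b
    simp only [f, g, LinearMap.add_apply, LinearMap.sub_apply, LinearMap.id_apply,
      LinearMap.smulRight_apply, LinearMap.smul_apply, map_sub, map_smul, smul_eq_mul, hφd]
    match_scalars <;>
      first
        | ring1
        | linear_combination (φ b) * hca
        | linear_combination (-(φ b)) * hca
  have hgf : ∀ b, g (f b) = b := by
    intro b
    simp only [f, g, LinearMap.add_apply, LinearMap.sub_apply, LinearMap.id_apply,
      LinearMap.smulRight_apply, LinearMap.smul_apply, map_add, map_smul, smul_eq_mul, hφd]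
    match_scalars <;>
      first
        | ring1
        | linear_combination (φ b) * hca
        | linear_combination (-(φ b)) * hca
  let e : B ≃ₗ[R] B := LinearEquiv.ofLinear f g (by ext b; exact hfg b) (by ext b; exact hgf b)
  let w : Module.Basis (Module.Free.ChooseBasisIndex R B) R B := v.map e
  have hw1 : w i₀ = 1 := by
    have : w i₀ = f (v i₀) := rfl
    rw [this]
    simp only [f, LinearMap.add_apply, LinearMap.id_apply, LinearMap.smulRight_apply, hφv,
      one_smul, hd]
    abel
  -- the linear map U y = σ (x * y) - σ y * σ x
  let U : B →ₗ[R] B :=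
    σ.comp (LinearMap.mulLeft R x) - (LinearMap.mulRight R (σ x)).comp σ
  have hU : ∀ z, U z = σ (x * z) - σ z * σ x := fun z => rfl
  have hUw : ∀ j, U (w j) = 0 := by
    intro j
    by_cases hj : j = i₀
    · subst hj
      rw [hU, hw1, mul_one, h1, one_mul, sub_self]
    · obtain ⟨ε, hε⟩ := si_u_mem σ h1 hnrd x (w j)
      obtain ⟨c', hc'⟩ := si_uy_mem σ h1 hnrd x (w j)
      have key : ε • w j = c' • w i₀ := by
        rw [Algebra.smul_def, hε, ← hc', Algebra.algebraMap_eq_smul_one, ← hw1]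
      have hzero : ε = 0 := by
        have h2 := congrArg (fun z => (w.repr z) j) key
        simp only [map_smul, Finsupp.smul_apply, Module.Basis.repr_self, smul_eq_mul,
          Finsupp.single_apply] at h2
        rw [if_neg (Ne.symm hj), mul_zero] at h2
        simpa using h2
      rw [hU, ← hε, hzero, map_zero]
  have hU0 : U = 0 := w.ext fun j => (hUw j).trans (LinearMap.zero_apply (w j)).symm
  have hUy := LinearMap.ext_iff.mp hU0 y
  rw [hU y, LinearMap.zero_apply] at hUy
  exact sub_eq_zero.mp hUy
end LocalCase

open scoped TensorProduct

section Transport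
variable {R B : Type*} [CommRing R] [Ring B] [Algebra R B]
variable [Module.Finite R B] [Module.Projective R B]

set_option maxHeartbeats 2000000 in
lemma si_anti (σ : B →ₗ[R] B) (h1 : σ 1 = 1)
    (hnrd : ∀ x : B, x * σ x ∈ (algebraMap R B).range)
    (x y : B) : σ (x * y) = σ y * σ x := by
  rw [← sub_eq_zero]
  set z := σ (x * y) - σ y * σ x with hz
  let I : Ideal R := LinearMap.ker (LinearMap.toSpanSingleton R B z)
  by_cases hI : I = ⊤
  · have h1I : (1 : R) ∈ I := hI ▸ Submodule.mem_top
    rw [LinearMap.mem_ker, LinearMap.toSpanSingleton_apply, one_smul] at h1I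
    exact h1I
  · exfalso
    obtain ⟨m, hmmax, hIm⟩ := Ideal.exists_le_maximal I hI
    haveI := hmmax.isPrime
    let Rm := Localization.AtPrime m
    haveI : Module.FinitePresentation R B := Module.finitePresentation_of_projective R B
    haveI : Module.Free Rm (Rm ⊗[R] B) :=
      Module.free_of_flat_of_isLocalRing (R := Rm) (P := Rm ⊗[R] B)
    let σ' := σ.baseChange Rm
    have h1' : σ' (1 : Rm ⊗[R] B) = 1 := by
      rw [Algebra.TensorProduct.one_def, LinearMap.baseChange_tmul, h1]
    -- polarized membership in the base change
    have hpol : ∀ ξ η : Rm ⊗[R] B,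
        ξ * σ' η + η * σ' ξ ∈ (algebraMap Rm (Rm ⊗[R] B)).range := by
      intro ξ η
      induction ξ using TensorProduct.induction_on generalizing η with
      | zero =>
        rw [map_zero, mul_zero, zero_mul, add_zero]
        exact zero_mem _
      | tmul c xx =>
        induction η using TensorProduct.induction_on with
        | zero =>
          rw [map_zero, mul_zero, zero_mul, zero_add]
          exact zero_mem _
        | tmul d yy =>
          rw [show σ' (d ⊗ₜ[R] yy) = d ⊗ₜ[R] σ yy from LinearMap.baseChange_tmul σ d yy,
            show σ' (c ⊗ₜ[R] xx) = c ⊗ₜ[R] σ xx from LinearMap.baseChange_tmul σ c xx, Algebra.TensorProduct.tmul_mul_tmul,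
            Algebra.TensorProduct.tmul_mul_tmul]
          obtain ⟨s, hs⟩ := si_polar_mem σ hnrd xx yy
          refine ⟨s • (c * d), ?_⟩
          rw [Algebra.TensorProduct.algebraMap_apply]
          have : (algebraMap Rm Rm) (s • (c * d)) = s • (c * d) := rfl
          rw [this]
          have h2 : xx * σ yy + yy * σ xx = s • (1 : B) := by
            rw [← hs, Algebra.algebraMap_eq_smul_one]
          have hcd : c * d = d * c := mul_comm c d
          calc (s • (c * d)) ⊗ₜ[R] (1 : B)
              = (c * d) ⊗ₜ[R] (s • (1 : B)) := by rw [TensorProduct.smul_tmul]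
            _ = (c * d) ⊗ₜ[R] (xx * σ yy + yy * σ xx) := by rw [h2]
            _ = (c * d) ⊗ₜ[R] (xx * σ yy) + (c * d) ⊗ₜ[R] (yy * σ xx) := by
                rw [TensorProduct.tmul_add]
            _ = (c * d) ⊗ₜ[R] (xx * σ yy) + (d * c) ⊗ₜ[R] (yy * σ xx) := by rw [hcd]
        | add η₁ η₂ ih1 ih2 =>
          have e3 : c ⊗ₜ[R] xx * σ' (η₁ + η₂) + (η₁ + η₂) * σ' (c ⊗ₜ[R] xx)
              = (c ⊗ₜ[R] xx * σ' η₁ + η₁ * σ' (c ⊗ₜ[R] xx))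
                + (c ⊗ₜ[R] xx * σ' η₂ + η₂ * σ' (c ⊗ₜ[R] xx)) := by
            rw [map_add]; noncomm_ring
          rw [e3]
          exact add_mem ih1 ih2
      | add ξ₁ ξ₂ ih1 ih2 =>
        have e3 : (ξ₁ + ξ₂) * σ' η + η * σ' (ξ₁ + ξ₂)
            = (ξ₁ * σ' η + η * σ' ξ₁) + (ξ₂ * σ' η + η * σ' ξ₂) := by
          rw [map_add]; noncomm_ring
        rw [e3]
        exact add_mem (ih1 η) (ih2 η)
    have hnrd' : ∀ ξ : Rm ⊗[R] B, ξ * σ' ξ ∈ (algebraMap Rm (Rm ⊗[R] B)).range := by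
      intro ξ
      induction ξ using TensorProduct.induction_on with
      | zero =>
        rw [map_zero, mul_zero]
        exact zero_mem _
      | tmul c xx =>
        rw [show σ' (c ⊗ₜ[R] xx) = c ⊗ₜ[R] σ xx from LinearMap.baseChange_tmul σ c xx, Algebra.TensorProduct.tmul_mul_tmul]
        obtain ⟨s, hs⟩ := hnrd xx
        refine ⟨s • (c * c), ?_⟩
        rw [Algebra.TensorProduct.algebraMap_apply]
        have : (algebraMap Rm Rm) (s • (c * c)) = s • (c * c) := rfl
        rw [this, TensorProduct.smul_tmul]
        rw [show s • (1 : B) = xx * σ xx by rw [← hs, Algebra.algebraMap_eq_smul_one]]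
      | add ξ₁ ξ₂ ih1 ih2 =>
        have e3 : (ξ₁ + ξ₂) * σ' (ξ₁ + ξ₂)
            = ξ₁ * σ' ξ₁ + ξ₂ * σ' ξ₂ + (ξ₁ * σ' ξ₂ + ξ₂ * σ' ξ₁) := by
          rw [map_add]; noncomm_ring
        rw [e3]
        exact add_mem (add_mem ih1 ih2) (hpol ξ₁ ξ₂)
    have main := si_local σ' h1' hnrd' ((1 : Rm) ⊗ₜ[R] x) ((1 : Rm) ⊗ₜ[R] y)
    have e4 : ((1 : Rm) ⊗ₜ[R] x) * ((1 : Rm) ⊗ₜ[R] y) = (1 : Rm) ⊗ₜ[R] (x * y) := by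
      rw [Algebra.TensorProduct.tmul_mul_tmul, one_mul]
    have e5 : σ' ((1 : Rm) ⊗ₜ[R] (x * y)) = (1 : Rm) ⊗ₜ[R] σ (x * y) :=
      LinearMap.baseChange_tmul σ 1 (x * y)
    have e6 : σ' ((1 : Rm) ⊗ₜ[R] y) * σ' ((1 : Rm) ⊗ₜ[R] x)
        = (1 : Rm) ⊗ₜ[R] (σ y * σ x) := by
      rw [show σ' ((1 : Rm) ⊗ₜ[R] y) = (1 : Rm) ⊗ₜ[R] σ y from LinearMap.baseChange_tmul σ 1 y,
        show σ' ((1 : Rm) ⊗ₜ[R] x) = (1 : Rm) ⊗ₜ[R] σ x from LinearMap.baseChange_tmul σ 1 x,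
        Algebra.TensorProduct.tmul_mul_tmul, one_mul]
    rw [e4, e5, e6] at main
    have hz0 : (1 : Rm) ⊗ₜ[R] z = 0 := by
      rw [hz, TensorProduct.tmul_sub, main, sub_self]
    -- localized module argument
    let f : B →ₗ[R] Rm ⊗[R] B := TensorProduct.mk R Rm B 1
    haveI : IsLocalizedModule m.primeCompl f :=
      (isLocalizedModule_iff_isBaseChange m.primeCompl Rm f).mpr
        (TensorProduct.isBaseChange R B Rm)
    have hfz : f z = f 0 := by
      rw [show f z = (1 : Rm) ⊗ₜ[R] z from rfl, show f 0 = (1 : Rm) ⊗ₜ[R] (0 : B) from rfl,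
        hz0, TensorProduct.tmul_zero]
    obtain ⟨s, hs⟩ := IsLocalizedModule.exists_of_eq (S := m.primeCompl) (f := f) hfz
    rw [smul_zero] at hs
    have hsI : (s : R) ∈ I := hs
    exact s.2 (hIm hsI)

end Transport


/-- `σ` is a standard involution on the `R`-algebra `B`: an `R`-linear anti-automorphism
with `σ(1) = 1`, `σ² = id`, and `x·σ(x) ∈ R` for all `x`. -/
def IsStandardInvolution (R : Type*) {B : Type*} [CommRing R] [Ring B] [Algebra R B]
    (σ : B →ₗ[R] B) : Prop :=
  σ 1 = 1 ∧ (∀ x y : B, σ (x * y) = σ y * σ x) ∧ (∀ x : B, σ (σ x) = x) ∧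
    ∀ x : B, x * σ x ∈ (algebraMap R B).range

/-- If `σ : B → B` is an `R`-linear map with `σ(1) = 1` and `x·σ(x) ∈ R` for all `x ∈ B`,
then `σ` is a standard involution on `B` (in particular `σ(xy) = σ(y)σ(x)` and
`σ(σ(x)) = x`). -/
theorem stmt13 (R B : Type) [CommRing R] [IsNoetherianRing R] [Ring B] [Algebra R B]
    [Module.Finite R B] [Module.Projective R B]
    (hconn : ∀ e : R, IsIdempotentElem e → e = 0 ∨ e = 1)
    (σ : B →ₗ[R] B) (h1 : σ 1 = 1)
    (hnrd : ∀ x : B, x * σ x ∈ (algebraMap R B).range) :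
    IsStandardInvolution R σ :=
  ⟨h1, fun x y => si_anti σ h1 hnrd x y, fun x => si_invol σ h1 hnrd x, hnrd⟩
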